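/- Let G be a connected simple graph, k an even integer ≥ 4. Then the spectral radius of the signless Laplacian tensor of G^{k,k/2} equals the spectral radius of the signless Laplacian matrix Q(G) = D(G) + A(G) of G. -/

import Mathlib

open Matrix

noncomputable def specRad {m : Type*} [Fintype m] [DecidableEq m]
    (M : Matrix m m ℝ) : ℝ :=
  sSup {r : ℝ | ∃ μ ∈ spectrum ℂ (M.map (Complex.ofReal)), r = ‖μ‖}

/-- The blow-up of a vertex `v` into a `(k/2)`-set. -/
def blow {V : Type*} [DecidableEq V] (k : ℕ) (v : V) : Finset (V × ℕ) :=
  ({v} : Finset V) ×ˢ Finset.range (k / 2)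

/-- The edge set of the hypergraph `G^{k,k/2}`. -/
def hEdges {V : Type*} [Fintype V] [DecidableEq V] (G : SimpleGraph V)
    [DecidableRel G.Adj] (k : ℕ) : Finset (Finset (V × ℕ)) :=
  (Finset.univ.filter fun p : V × V => G.Adj p.1 p.2).image
    (fun p => blow k p.1 ∪ blow k p.2)

/-- `(𝒬 x^{k-1})_u = d_u x_u^{k-1} + (𝒜 x^{k-1})_u` for the signless Laplacian tensor of
a `k`-uniform hypergraph with edge set `E`. -/
noncomputable def qPoly {W : Type*} [DecidableEq W] (E : Finset (Finset W)) (k : ℕ)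
    (x : W → ℂ) (u : W) : ℂ :=
  ((E.filter fun e => u ∈ e).card : ℂ) * (x u) ^ (k - 1) +
    ∑ e ∈ E.filter (fun e => u ∈ e), ∏ w ∈ e.erase u, x w

/-- The spectral radius of the signless Laplacian tensor of a `k`-uniform hypergraph. -/
noncomputable def hQSpecRad {W : Type*} [DecidableEq W] (E : Finset (Finset W))
    (k : ℕ) : ℝ :=
  sSup {r : ℝ | ∃ (lam : ℂ) (x : W → ℂ), x ≠ 0 ∧
    (∀ u, qPoly E k x u = lam * (x u) ^ (k - 1)) ∧ r = ‖lam‖}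


section AuxSpec

lemma matrix_mem_spectrum_iff {n : Type*} [Fintype n] [DecidableEq n]
    (A : Matrix n n ℂ) (μ : ℂ) :
    μ ∈ spectrum ℂ A ↔ ∃ v : n → ℂ, v ≠ 0 ∧ A *ᵥ v = μ • v := by
  rw [← AlgEquiv.spectrum_eq (Matrix.toLinAlgEquiv' (R := ℂ) (n := n)) A,
    ← Module.End.hasEigenvalue_iff_mem_spectrum]
  constructor
  · intro h
    obtain ⟨v, hv⟩ := h.exists_hasEigenvector
    exact ⟨v, hv.2, by simpa [Module.End.mem_eigenspace_iff,
      Matrix.toLinAlgEquiv'_apply] using hv.1⟩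
  · rintro ⟨v, hv0, hv⟩
    exact Module.End.hasEigenvalue_of_hasEigenvector
      ⟨Module.End.mem_eigenspace_iff.mpr (by simpa [Matrix.toLinAlgEquiv'_apply] using hv), hv0⟩

end AuxSpec

section AuxMain

open Finset

variable {V : Type*} [Fintype V] [DecidableEq V] (G : SimpleGraph V) [DecidableRel G.Adj]

noncomputable abbrev Qmat : Matrix V V ℝ :=
  Matrix.diagonal (fun v => (G.degree v : ℝ)) + G.adjMatrix ℝ

lemma Qmat_mulVec (x : V → ℝ) (v : V) :
    (Qmat G *ᵥ x) v = (G.degree v : ℝ) * x v + ∑ w ∈ G.neighborFinset v, x w := by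
  rw [add_mulVec, Pi.add_apply, mulVec_diagonal, G.adjMatrix_mulVec_apply]

lemma Qmat_isHermitian : (Qmat G).IsHermitian := by
  ext i j
  simp only [Matrix.conjTranspose_apply, Matrix.add_apply, Matrix.diagonal_apply,
    SimpleGraph.adjMatrix_apply, star_trivial]
  by_cases h : i = j
  · subst h; simp
  · simp [h, Ne.symm h, G.adj_comm i j]

lemma nbr_sum_comm (f : V → V → ℝ) :
    ∑ v, ∑ w ∈ G.neighborFinset v, f v w = ∑ v, ∑ w ∈ G.neighborFinset v, f w v := by
  have h : ∀ g : V → V → ℝ, ∑ v, ∑ w ∈ G.neighborFinset v, g v w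
      = ∑ v : V, ∑ w : V, if G.Adj v w then g v w else 0 := by
    intro g
    refine Finset.sum_congr rfl fun v _ => ?_
    rw [SimpleGraph.neighborFinset_eq_filter, Finset.sum_filter]
  rw [h, h, Finset.sum_comm]
  refine Finset.sum_congr rfl fun v _ => Finset.sum_congr rfl fun w _ => ?_
  simp only [G.adj_comm v w]

lemma Qmat_form (x : V → ℝ) :
    x ⬝ᵥ (Qmat G *ᵥ x) = ∑ v, ∑ w ∈ G.neighborFinset v, (x v ^ 2 + x v * x w) := by
  unfold dotProduct
  refine Finset.sum_congr rfl fun v _ => ?_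
  rw [Qmat_mulVec, mul_add, Finset.mul_sum, Finset.sum_add_distrib, Finset.sum_const,
    nsmul_eq_mul, ← G.card_neighborFinset_eq_degree]
  ring_nf

lemma Qmat_form_nonneg (x : V → ℝ) : 0 ≤ x ⬝ᵥ (Qmat G *ᵥ x) := by
  have h2 : 2 * (x ⬝ᵥ (Qmat G *ᵥ x)) =
      ∑ v, ∑ w ∈ G.neighborFinset v, (x v + x w) ^ 2 := by
    rw [two_mul, Qmat_form]
    nth_rewrite 2 [nbr_sum_comm G (fun v w => x v ^ 2 + x v * x w)]
    rw [← Finset.sum_add_distrib]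
    refine Finset.sum_congr rfl fun v _ => ?_
    rw [← Finset.sum_add_distrib]
    refine Finset.sum_congr rfl fun w _ => by ring
  nlinarith [Finset.sum_nonneg (fun v (_ : v ∈ (Finset.univ : Finset V)) =>
    Finset.sum_nonneg (fun w (_ : w ∈ G.neighborFinset v) => sq_nonneg (x v + x w)))]

lemma Qmat_posSemidef : (Qmat G).PosSemidef :=
  Matrix.PosSemidef.of_dotProduct_mulVec_nonneg (Qmat_isHermitian G) fun x => by simpa using Qmat_form_nonneg G x

lemma exists_perron (hG : G.Connected) :
    ∃ (ρ : ℝ) (y : V → ℝ), 0 ≤ ρ ∧ (∀ v, 0 < y v) ∧ Qmat G *ᵥ y = ρ • y := by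
  have hne : Nonempty V := hG.nonempty
  have hH := Qmat_isHermitian G
  obtain ⟨i0, -, hmax⟩ := Finset.exists_max_image Finset.univ hH.eigenvalues
    ⟨Classical.arbitrary V, Finset.mem_univ _⟩
  obtain ⟨ρ, hρdef⟩ : ∃ ρ : ℝ, ρ = hH.eigenvalues i0 := ⟨_, rfl⟩
  rw [← hρdef] at hmax
  set y0 : V → ℝ := ⇑(hH.eigenvectorBasis i0) with hy0def
  have hy0 : Qmat G *ᵥ y0 = ρ • y0 := by rw [hρdef]; exact hH.mulVec_eigenvectorBasis i0
  have hy0ne : y0 ≠ 0 := by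
    intro h
    exact hH.eigenvectorBasis.orthonormal.ne_zero i0 (by ext v; exact congrFun h v)
  have hρ0 : 0 ≤ ρ := hρdef ▸ (Qmat_posSemidef G).eigenvalues_nonneg i0
  -- the matrix ρ•1 - Q is PSD
  set N : Matrix V V ℝ := ρ • (1 : Matrix V V ℝ) - Qmat G with hNdef
  have hNpsd : N.PosSemidef := by
    have hsp := hH.spectral_theorem
    rw [Unitary.conjStarAlgAut_apply] at hsp
    set U : Matrix V V ℝ := (hH.eigenvectorUnitary : Matrix V V ℝ) with hUdef
    have hU1 : U * star U = 1 := Matrix.mem_unitaryGroup_iff.mp hH.eigenvectorUnitary.2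
    have hN : N = U * Matrix.diagonal (fun i => ρ - hH.eigenvalues i) * star U := by
      have h1 : Matrix.diagonal (fun i : V => ρ - hH.eigenvalues i)
          = ρ • (1 : Matrix V V ℝ) - Matrix.diagonal (RCLike.ofReal ∘ hH.eigenvalues) := by
        rw [Matrix.smul_one_eq_diagonal, ← Matrix.diagonal_sub]
        rfl
      rw [h1, Matrix.mul_sub, Matrix.sub_mul, ← hsp, Matrix.mul_smul, Matrix.mul_one,
        Matrix.smul_mul, hU1, hNdef]
    rw [hN]
    refine Matrix.PosSemidef.mul_mul_conjTranspose_same ?_ U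
    exact Matrix.posSemidef_diagonal_iff.mpr fun i => sub_nonneg.mpr (hmax i (Finset.mem_univ i))
  -- take absolute values
  set y : V → ℝ := fun v => |y0 v| with hydef
  have hyQ : y0 ⬝ᵥ (Qmat G *ᵥ y0) ≤ y ⬝ᵥ (Qmat G *ᵥ y) := by
    rw [Qmat_form, Qmat_form]
    refine Finset.sum_le_sum fun v _ => Finset.sum_le_sum fun w _ => ?_
    have h1 : y0 v * y0 w ≤ |y0 v| * |y0 w| := (le_abs_self _).trans_eq (abs_mul _ _)
    have h2 : y v ^ 2 = y0 v ^ 2 := by rw [hydef]; exact sq_abs _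
    have h3 : y v * y w = |y0 v| * |y0 w| := rfl
    rw [h2, h3]; linarith
  have hyy : y ⬝ᵥ y = y0 ⬝ᵥ y0 := by
    refine Finset.sum_congr rfl fun v _ => ?_
    show |y0 v| * |y0 v| = y0 v * y0 v
    exact abs_mul_abs_self _
  have hexp : ∀ x : V → ℝ, x ⬝ᵥ (N *ᵥ x) = ρ * (x ⬝ᵥ x) - x ⬝ᵥ (Qmat G *ᵥ x) := by
    intro x
    rw [hNdef, Matrix.sub_mulVec, Matrix.smul_mulVec, Matrix.one_mulVec,
      dotProduct_sub, dotProduct_smul, smul_eq_mul]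
  have hformN : y ⬝ᵥ (N *ᵥ y) = 0 := by
    have h0 : y0 ⬝ᵥ (N *ᵥ y0) = 0 := by
      rw [hexp, hy0, dotProduct_smul, smul_eq_mul, sub_self]
    have hub : y ⬝ᵥ (N *ᵥ y) ≤ 0 := by
      rw [hexp, ← h0, hexp, hyy]; linarith
    have hlb : 0 ≤ y ⬝ᵥ (N *ᵥ y) := by simpa using hNpsd.dotProduct_mulVec_nonneg y
    linarith
  have hNy : N *ᵥ y = 0 := by
    refine (hNpsd.dotProduct_mulVec_zero_iff y).mp ?_
    simpa using hformN
  have hQy : Qmat G *ᵥ y = ρ • y := by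
    rw [hNdef, Matrix.sub_mulVec, sub_eq_zero] at hNy
    rw [← hNy, Matrix.smul_mulVec, Matrix.one_mulVec]
  have hynn : ∀ v, 0 ≤ y v := fun v => abs_nonneg _
  have hyne : ∃ v, y v ≠ 0 := by
    by_contra h
    push_neg at h
    exact hy0ne (funext fun v => abs_eq_zero.mp (h v))
  obtain ⟨v0, hv0⟩ := hyne
  have hzero : ∀ v, y v = 0 → ∀ w ∈ G.neighborFinset v, y w = 0 := by
    intro v hv w hw
    have h1 : (Qmat G *ᵥ y) v = ρ * y v := by rw [hQy]; rfl
    rw [Qmat_mulVec, hv, mul_zero, mul_zero, zero_add] at h1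
    exact (Finset.sum_eq_zero_iff_of_nonneg fun w _ => hynn w).mp h1 w hw
  have hwalk : ∀ (a b : V), G.Walk a b → y a = 0 → y b = 0 := by
    intro a b p
    induction p with
    | nil => exact id
    | cons h p ih =>
      intro ha
      exact ih (hzero _ ha _ ((SimpleGraph.mem_neighborFinset _ _ _).mpr h))
  refine ⟨ρ, y, hρ0, fun v => ?_, hQy⟩
  rcases (hynn v).lt_or_eq with h | h
  · exact h
  · exact absurd (hwalk v v0 (hG v v0).some h.symm) hv0

lemma Qmap_mulVec (x : V → ℂ) (u : V) :
    ((Qmat G).map Complex.ofReal *ᵥ x) u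
      = (G.degree u : ℂ) * x u + ∑ w ∈ G.neighborFinset u, x w := by
  have h1 : ∀ w, (Complex.ofReal (Qmat G u w)) * x w
      = (if u = w then (G.degree u : ℂ) else 0) * x w + (if G.Adj u w then x w else 0) := by
    intro w
    by_cases h : u = w
    · subst h
      simp [Matrix.add_apply, Matrix.diagonal_apply]
    · by_cases h2 : G.Adj u w <;>
        simp [Matrix.add_apply, Matrix.diagonal_apply_ne _ h, h, h2]
  show ∑ w, (Qmat G).map Complex.ofReal u w * x w = _
  calc ∑ w, (Qmat G).map Complex.ofReal u w * x w
      = ∑ w, ((if u = w then (G.degree u : ℂ) else 0) * x w + (if G.Adj u w then x w else 0)) :=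
        Finset.sum_congr rfl fun w _ => h1 w
    _ = _ := by
        rw [Finset.sum_add_distrib]
        congr 1
        · simp [ite_mul, Finset.sum_ite_eq]
        · rw [SimpleGraph.neighborFinset_eq_filter, Finset.sum_filter]

lemma matrix_bound (ρ : ℝ) (y : V → ℝ) (hy : ∀ v, 0 < y v)
    (hρy : Qmat G *ᵥ y = ρ • y) {μ : ℂ} {x : V → ℂ} (hx : x ≠ 0)
    (heig : (Qmat G).map Complex.ofReal *ᵥ x = μ • x) : ‖μ‖ ≤ ρ := by
  obtain ⟨u1, hu1⟩ := Function.ne_iff.mp hx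
  obtain ⟨u0, -, hmax⟩ := Finset.exists_max_image Finset.univ
    (fun u => ‖x u‖ / y u) ⟨u1, Finset.mem_univ _⟩
  set c := ‖x u0‖ / y u0 with hc
  have hcpos : 0 < c := lt_of_lt_of_le
    (div_pos (by simpa using hu1) (hy u1)) (hmax u1 (Finset.mem_univ _))
  have hbound : ∀ u, ‖x u‖ ≤ c * y u := fun u =>
    (div_le_iff₀ (hy u)).mp (hmax u (Finset.mem_univ _))
  have hxu0 : ‖x u0‖ = c * y u0 := by
    rw [hc, div_mul_cancel₀ _ (hy u0).ne']
  have heq := congrFun heig u0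
  rw [Qmap_mulVec] at heq
  have hry : (G.degree u0 : ℝ) * y u0 + ∑ w ∈ G.neighborFinset u0, y w = ρ * y u0 := by
    have := congrFun hρy u0
    rw [Qmat_mulVec] at this
    simpa using this
  have hkey : ‖μ‖ * (c * y u0) ≤ c * (ρ * y u0) := by
    calc ‖μ‖ * (c * y u0) = ‖μ‖ * ‖x u0‖ := by rw [hxu0]
      _ = ‖(G.degree u0 : ℂ) * x u0 + ∑ w ∈ G.neighborFinset u0, x w‖ := by
          rw [← norm_mul]
          congr 1
          rw [heq]; rfl
      _ ≤ ‖(G.degree u0 : ℂ) * x u0‖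
            + ‖∑ w ∈ G.neighborFinset u0, x w‖ := norm_add_le _ _
      _ ≤ (G.degree u0 : ℝ) * (c * y u0) + ∑ w ∈ G.neighborFinset u0, c * y w := by
          gcongr
          · rw [norm_mul]
            simp only [Complex.norm_natCast]
            gcongr
            exact hbound u0
          · exact (norm_sum_le _ _).trans
              (Finset.sum_le_sum fun w _ => hbound w)
      _ = c * ((G.degree u0 : ℝ) * y u0 + ∑ w ∈ G.neighborFinset u0, y w) := by
          rw [mul_add, Finset.mul_sum]
          ring_nf
      _ = c * (ρ * y u0) := by rw [hry]
  have hpos : (0:ℝ) < c * y u0 := mul_pos hcpos (hy u0)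
  have h2 : ‖μ‖ * (c * y u0) ≤ ρ * (c * y u0) :=
    hkey.trans_eq (by ring)
  exact le_of_mul_le_mul_right h2 hpos

lemma mem_blow {k : ℕ} {v : V} {u : V × ℕ} : u ∈ blow k v ↔ u.1 = v ∧ u.2 < k / 2 := by
  obtain ⟨a, j⟩ := u
  rw [blow, Finset.mem_product, Finset.mem_singleton, Finset.mem_range]

lemma blow_eq_image (k : ℕ) (v : V) :
    blow k v = (Finset.range (k / 2)).image (fun j => (v, j)) := by
  ext ⟨a, j⟩
  simp only [mem_blow, Finset.mem_image, Finset.mem_range, Prod.mk.injEq]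
  constructor
  · rintro ⟨rfl, hj⟩; exact ⟨j, hj, rfl, rfl⟩
  · rintro ⟨j', hj', rfl, rfl⟩; exact ⟨rfl, hj'⟩

lemma card_blow (k : ℕ) (v : V) : (blow k v).card = k / 2 := by
  rw [blow_eq_image, Finset.card_image_of_injective _ (fun a b h => by simpa using h),
    Finset.card_range]

lemma blow_disjoint {k : ℕ} {v w : V} (h : v ≠ w) : Disjoint (blow k v) (blow k w) := by
  rw [Finset.disjoint_left]
  intro u hu hu'
  exact h ((mem_blow.mp hu).1 ▸ (mem_blow.mp hu').1.symm ▸ rfl)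

lemma mem_hEdges {k : ℕ} {e : Finset (V × ℕ)} :
    e ∈ hEdges G k ↔ ∃ a b, G.Adj a b ∧ e = blow k a ∪ blow k b := by
  simp only [hEdges, Finset.mem_image, Finset.mem_filter, Finset.mem_univ, true_and]
  constructor
  · rintro ⟨⟨a, b⟩, hab, rfl⟩
    exact ⟨a, b, hab, rfl⟩
  · rintro ⟨a, b, hab, rfl⟩
    exact ⟨(a, b), hab, rfl⟩

lemma filter_hEdges {k : ℕ} (hm : 0 < k / 2) (v : V) (i : ℕ) (hi : i < k / 2) :
    (hEdges G k).filter (fun e => (v, i) ∈ e)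
      = (G.neighborFinset v).image (fun w => blow k v ∪ blow k w) := by
  ext e
  simp only [Finset.mem_filter, Finset.mem_image, SimpleGraph.mem_neighborFinset, mem_hEdges]
  constructor
  · rintro ⟨⟨a, b, hab, rfl⟩, hmem⟩
    rcases Finset.mem_union.mp hmem with h | h
    · rcases mem_blow.mp h with ⟨rfl, -⟩
      exact ⟨b, hab, rfl⟩
    · rcases mem_blow.mp h with ⟨rfl, -⟩
      exact ⟨a, hab.symm, Finset.union_comm _ _⟩
  · rintro ⟨w, hw, rfl⟩
    exact ⟨⟨v, w, hw, rfl⟩, Finset.mem_union_left _ (mem_blow.mpr ⟨rfl, hi⟩)⟩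

lemma blow_union_injOn {k : ℕ} (hm : 0 < k / 2) (v : V) :
    Set.InjOn (fun w => blow k v ∪ blow k w) (G.neighborFinset v) := by
  intro w hw w' hw' h
  simp only [Finset.coe_insert, Set.mem_insert_iff, Finset.mem_coe,
    SimpleGraph.mem_neighborFinset] at hw hw'
  have hne : w ≠ v := fun hh => G.loopless.irrefl v (hh ▸ hw)
  have h0 : (w, 0) ∈ blow k v ∪ blow k w := Finset.mem_union_right _ (mem_blow.mpr ⟨rfl, hm⟩)
  rw [show blow k v ∪ blow k w = blow k v ∪ blow k w' from h] at h0
  rcases Finset.mem_union.mp h0 with h1 | h1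
  · exact absurd (mem_blow.mp h1).1 hne
  · exact (mem_blow.mp h1).1

lemma card_filter_hEdges {k : ℕ} (hm : 0 < k / 2) (v : V) (i : ℕ) (hi : i < k / 2) :
    ((hEdges G k).filter (fun e => (v, i) ∈ e)).card = G.degree v := by
  rw [filter_hEdges G hm v i hi, Finset.card_image_of_injOn (blow_union_injOn G hm v),
    SimpleGraph.card_neighborFinset_eq_degree]

lemma not_mem_hEdges_ge {k : ℕ} {v : V} {i : ℕ} (hi : k / 2 ≤ i) {e : Finset (V × ℕ)}
    (he : e ∈ hEdges G k) : (v, i) ∉ e := by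
  rcases (mem_hEdges G).mp he with ⟨a, b, -, rfl⟩
  intro h
  rcases Finset.mem_union.mp h with h1 | h1 <;>
    exact absurd (mem_blow.mp h1).2 (not_lt.mpr hi)

lemma filter_hEdges_ge {k : ℕ} {v : V} {i : ℕ} (hi : k / 2 ≤ i) :
    (hEdges G k).filter (fun e => (v, i) ∈ e) = ∅ := by
  rw [Finset.filter_eq_empty_iff]
  exact fun {e} he => not_mem_hEdges_ge G hi he

lemma erase_union_blow {k : ℕ} {v w : V} (hvw : v ≠ w) (i : ℕ) {M : Type*} [CommMonoid M] (x : V × ℕ → M) :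
    ∏ z ∈ (blow k v ∪ blow k w).erase (v, i), x z
      = (∏ z ∈ (blow k v).erase (v, i), x z) * ∏ z ∈ blow k w, x z := by
  have h1 : (blow k v ∪ blow k w).erase (v, i) = (blow k v).erase (v, i) ∪ blow k w := by
    rw [Finset.erase_union_distrib]
    congr 1
    exact Finset.erase_eq_of_notMem (fun h => hvw (mem_blow.mp h).1)
  rw [h1, Finset.prod_union]
  exact (blow_disjoint hvw).mono_left (Finset.erase_subset _ _)

lemma prod_blow_erase (k : ℕ) {M : Type*} [CommMonoid M] (x : V × ℕ → M) (v : V) (i : ℕ) :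
    ∏ z ∈ (blow k v).erase (v, i), x z = ∏ j ∈ (Finset.range (k / 2)).erase i, x (v, j) := by
  rw [blow_eq_image]
  have : ((Finset.range (k / 2)).image (fun j => (v, j))).erase (v, i)
      = ((Finset.range (k / 2)).erase i).image (fun j => (v, j)) := by
    ext ⟨a, j⟩
    simp only [Finset.mem_erase, Finset.mem_image, Finset.mem_range, Prod.mk.injEq, ne_eq]
    constructor
    · rintro ⟨hne, j', hj', rfl, rfl⟩
      exact ⟨j', ⟨fun h => hne ⟨rfl, h⟩, hj'⟩, rfl, rfl⟩
    · rintro ⟨j', ⟨hji, hj'⟩, rfl, rfl⟩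
      exact ⟨fun h => hji h.2, j', hj', rfl, rfl⟩
  rw [this, Finset.prod_image (fun a _ b _ h => by simpa using h)]

lemma prod_blow (k : ℕ) {M : Type*} [CommMonoid M] (x : V × ℕ → M) (v : V) :
    ∏ z ∈ blow k v, x z = ∏ j ∈ Finset.range (k / 2), x (v, j) := by
  rw [blow_eq_image, Finset.prod_image (fun a _ b _ h => by simpa using h)]



lemma qPoly_sum {k : ℕ} (hm : 0 < k / 2) (x : V × ℕ → ℂ) (v : V) (i : ℕ) (hi : i < k / 2) :
    ∑ e ∈ (hEdges G k).filter (fun e => (v, i) ∈ e), ∏ z ∈ e.erase (v, i), x z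
      = ∑ w ∈ G.neighborFinset v,
          (∏ j ∈ (Finset.range (k / 2)).erase i, x (v, j)) * ∏ j ∈ Finset.range (k / 2), x (w, j) := by
  rw [filter_hEdges G hm v i hi, Finset.sum_image (blow_union_injOn G hm v)]
  refine Finset.sum_congr rfl fun w hw => ?_
  have hvw : v ≠ w := ((SimpleGraph.mem_neighborFinset _ _ _).mp hw).ne
  rw [erase_union_blow hvw, prod_blow_erase, prod_blow]

lemma tensor_achieves [Nonempty V] {k : ℕ} (hk : Even k) (hk4 : 4 ≤ k)
    (ρ : ℝ) (y : V → ℝ) (hy : ∀ v, 0 < y v) (hQy : Qmat G *ᵥ y = ρ • y) :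
    ∃ x : V × ℕ → ℂ, x ≠ 0 ∧ ∀ u, qPoly (hEdges G k) k x u = (ρ : ℂ) * (x u) ^ (k - 1) := by
  have hk2 : k = 2 * (k / 2) := (Nat.two_mul_div_two_of_even hk).symm
  have hm2 : 2 ≤ k / 2 := by omega
  set t : V → ℝ := fun v => (y v) ^ (((k / 2 : ℕ) : ℝ))⁻¹ with htdef
  have htpos : ∀ v, 0 < t v := fun v => Real.rpow_pos_of_pos (hy v) _
  have htpow : ∀ v, (t v) ^ (k / 2) = y v := fun v =>
    Real.rpow_inv_natCast_pow (hy v).le (by omega)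
  set x : V × ℕ → ℂ := fun u => if u.2 < k / 2 then (t u.1 : ℂ) else 0 with hxdef
  refine ⟨x, ?_, ?_⟩
  · intro h
    have h0 := congrFun h (Classical.arbitrary V, 0)
    simp only [hxdef, Pi.zero_apply, if_pos (show (0:ℕ) < k/2 by omega)] at h0
    exact (htpos _).ne' (by exact_mod_cast h0)
  · rintro ⟨v, i⟩
    by_cases hi : i < k / 2
    · unfold qPoly
      rw [card_filter_hEdges G (by omega) v i hi, qPoly_sum G (by omega) x v i hi]
      have hxvi : x (v, i) = (t v : ℂ) := if_pos hi
      have hprodv : ∏ j ∈ (Finset.range (k / 2)).erase i, x (v, j) = (t v : ℂ) ^ (k / 2 - 1) := by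
        rw [Finset.prod_congr rfl (fun j hj => ?_), Finset.prod_const,
          Finset.card_erase_of_mem (Finset.mem_range.mpr hi), Finset.card_range]
        exact if_pos (Finset.mem_range.mp (Finset.mem_of_mem_erase hj))
      have hprodw : ∀ w : V, ∏ j ∈ Finset.range (k / 2), x (w, j) = ((y w : ℝ) : ℂ) := by
        intro w
        have hconst : ∀ j ∈ Finset.range (k / 2), x (w, j) = ((t w : ℝ) : ℂ) :=
          fun j hj => if_pos (Finset.mem_range.mp hj)
        rw [Finset.prod_congr rfl hconst, Finset.prod_const, Finset.card_range, ← htpow w]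
        push_cast
        ring
      rw [hxvi, hprodv, Finset.sum_congr rfl (fun w _ => by rw [hprodw w])]
      have hdeg := congrFun hQy v
      rw [Qmat_mulVec G] at hdeg
      have hdeg' : (G.degree v : ℝ) * y v + ∑ w ∈ G.neighborFinset v, y w = ρ * y v := by
        simpa using hdeg
      have hreal : (G.degree v : ℝ) * (t v) ^ (k - 1)
          + ∑ w ∈ G.neighborFinset v, (t v) ^ (k / 2 - 1) * y w = ρ * (t v) ^ (k - 1) := by
        have htv : (t v) ^ (k - 1) = (t v) ^ (k / 2 - 1) * y v := by
          rw [← htpow v, ← pow_add]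
          congr 1
          omega
        rw [htv, ← Finset.mul_sum]
        calc (G.degree v : ℝ) * ((t v) ^ (k/2 - 1) * y v) + (t v) ^ (k/2 - 1) * ∑ w ∈ G.neighborFinset v, y w
            = (t v) ^ (k/2 - 1) * ((G.degree v : ℝ) * y v + ∑ w ∈ G.neighborFinset v, y w) := by ring
          _ = (t v) ^ (k/2 - 1) * (ρ * y v) := by rw [hdeg']
          _ = ρ * ((t v) ^ (k/2 - 1) * y v) := by ring
      exact_mod_cast congrArg Complex.ofReal hreal
    · unfold qPoly
      rw [filter_hEdges_ge G (le_of_not_gt hi)]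
      have hx0 : x (v, i) = 0 := if_neg hi
      simp [hx0, zero_pow (show k - 1 ≠ 0 by omega)]

lemma tensor_bound {k : ℕ} (hk : Even k) (hk4 : 4 ≤ k)
    (ρ : ℝ) (y : V → ℝ) (hy : ∀ v, 0 < y v) (hQy : Qmat G *ᵥ y = ρ • y) (hρ0 : 0 ≤ ρ)
    (lam : ℂ) (x : V × ℕ → ℂ) (hx : x ≠ 0)
    (heq : ∀ u, qPoly (hEdges G k) k x u = lam * (x u) ^ (k - 1)) :
    ‖lam‖ ≤ ρ := by
  rcases eq_or_ne lam 0 with rfl | hlam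
  · simpa using hρ0
  have hk2 : k = 2 * (k / 2) := (Nat.two_mul_div_two_of_even hk).symm
  have hm2 : 2 ≤ k / 2 := by omega
  have hk1 : k - 1 ≠ 0 := by omega
  have hvan : ∀ (a : V) (j : ℕ), k / 2 ≤ j → x (a, j) = 0 := by
    intro a j hj
    have h := heq (a, j)
    unfold qPoly at h
    rw [filter_hEdges_ge G hj] at h
    simp only [Finset.card_empty, Finset.sum_empty, Nat.cast_zero, zero_mul, add_zero] at h
    rcases mul_eq_zero.mp h.symm with h' | h'
    · exact absurd h' hlam
    · exact pow_eq_zero_iff hk1 |>.mp h'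
  obtain ⟨u1, hu1⟩ := Function.ne_iff.mp hx
  have hu1m : u1.2 < k / 2 := by
    by_contra h
    exact hu1 (by rcases u1 with ⟨a, j⟩; exact hvan a j (le_of_not_gt h))
  set t : V → ℝ := fun v => (y v) ^ (((k / 2 : ℕ) : ℝ))⁻¹ with htdef
  have htpos : ∀ v, 0 < t v := fun v => Real.rpow_pos_of_pos (hy v) _
  have htpow : ∀ v, (t v) ^ (k / 2) = y v := fun v =>
    Real.rpow_inv_natCast_pow (hy v).le (by omega)
  set S : Finset (V × ℕ) := Finset.univ ×ˢ Finset.range (k / 2) with hSdef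
  have hu1S : u1 ∈ S := by
    rw [hSdef, Finset.mem_product]
    exact ⟨Finset.mem_univ _, Finset.mem_range.mpr hu1m⟩
  obtain ⟨⟨v, i⟩, hu0S, hmax⟩ := Finset.exists_max_image S
    (fun u => ‖x u‖ / t u.1) ⟨u1, hu1S⟩
  have him : i < k / 2 := by
    rw [hSdef, Finset.mem_product] at hu0S
    exact Finset.mem_range.mp hu0S.2
  set c := ‖x (v, i)‖ / t v with hc
  have hcpos : 0 < c :=
    lt_of_lt_of_le (div_pos (by simpa using hu1) (htpos _)) (hmax u1 hu1S)
  have hbound : ∀ (a : V) (j : ℕ), j < k / 2 → ‖x (a, j)‖ ≤ c * t a := by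
    intro a j hj
    have hmem : (a, j) ∈ S := by
      rw [hSdef, Finset.mem_product]
      exact ⟨Finset.mem_univ _, Finset.mem_range.mpr hj⟩
    exact (div_le_iff₀ (htpos a)).mp (hmax _ hmem)
  have hxu0 : ‖x (v, i)‖ = c * t v := by
    rw [hc, div_mul_cancel₀ _ (htpos v).ne']
  have h := heq (v, i)
  unfold qPoly at h
  rw [card_filter_hEdges G (by omega) v i him, qPoly_sum G (by omega) x v i him] at h
  have hprod : ∀ w ∈ G.neighborFinset v,
      ‖(∏ j ∈ (Finset.range (k / 2)).erase i, x (v, j))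
          * ∏ j ∈ Finset.range (k / 2), x (w, j)‖
        ≤ (c * t v) ^ (k / 2 - 1) * (c ^ (k / 2) * y w) := by
    intro w hw
    rw [norm_mul, norm_prod, norm_prod]
    have h1 : ∏ j ∈ (Finset.range (k / 2)).erase i, ‖x (v, j)‖
        ≤ (c * t v) ^ (k / 2 - 1) := by
      have := Finset.prod_le_prod (s := (Finset.range (k / 2)).erase i)
        (f := fun j => ‖x (v, j)‖) (g := fun _ => c * t v)
        (fun j _ => norm_nonneg _)
        (fun j hj => hbound v j (Finset.mem_range.mp (Finset.mem_of_mem_erase hj)))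
      rwa [Finset.prod_const, Finset.card_erase_of_mem (Finset.mem_range.mpr him),
        Finset.card_range] at this
    have h2 : ∏ j ∈ Finset.range (k / 2), ‖x (w, j)‖
        ≤ c ^ (k / 2) * y w := by
      have := Finset.prod_le_prod (s := Finset.range (k / 2))
        (f := fun j => ‖x (w, j)‖) (g := fun _ => c * t w)
        (fun j _ => norm_nonneg _)
        (fun j hj => hbound w j (Finset.mem_range.mp hj))
      rwa [Finset.prod_const, Finset.card_range, mul_pow, htpow w] at this
    exact mul_le_mul h1 h2 (Finset.prod_nonneg fun j _ => norm_nonneg _)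
      (pow_nonneg (mul_nonneg hcpos.le (htpos v).le) _)
  have hdeg := congrFun hQy v
  rw [Qmat_mulVec G] at hdeg
  have hdeg' : (G.degree v : ℝ) * y v + ∑ w ∈ G.neighborFinset v, y w = ρ * y v := by
    simpa using hdeg
  have hsplit : (c * t v) ^ (k - 1) = (c * t v) ^ (k / 2 - 1) * c ^ (k / 2) * y v := by
    have : (c * t v) ^ (k - 1) = (c * t v) ^ (k / 2 - 1) * (c * t v) ^ (k / 2) := by
      rw [← pow_add]
      congr 1
      omega
    rw [this, mul_pow c (t v) (k / 2), htpow v]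
    ring
  have hreal : (G.degree v : ℝ) * (c * t v) ^ (k - 1)
      + ∑ w ∈ G.neighborFinset v, (c * t v) ^ (k / 2 - 1) * (c ^ (k / 2) * y w)
      = ρ * (c * t v) ^ (k - 1) := by
    have hsum : ∑ w ∈ G.neighborFinset v, (c * t v) ^ (k / 2 - 1) * (c ^ (k / 2) * y w)
        = (c * t v) ^ (k / 2 - 1) * c ^ (k / 2) * ∑ w ∈ G.neighborFinset v, y w := by
      rw [Finset.mul_sum]
      exact Finset.sum_congr rfl fun w _ => by ring
    rw [hsum, hsplit]
    calc (G.degree v : ℝ) * ((c * t v) ^ (k/2 - 1) * c ^ (k/2) * y v)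
          + (c * t v) ^ (k/2 - 1) * c ^ (k/2) * ∑ w ∈ G.neighborFinset v, y w
        = (c * t v) ^ (k/2 - 1) * c ^ (k/2)
            * ((G.degree v : ℝ) * y v + ∑ w ∈ G.neighborFinset v, y w) := by ring
      _ = (c * t v) ^ (k/2 - 1) * c ^ (k/2) * (ρ * y v) := by rw [hdeg']
      _ = ρ * ((c * t v) ^ (k/2 - 1) * c ^ (k/2) * y v) := by ring
  have hkey : ‖lam‖ * (c * t v) ^ (k - 1) ≤ ρ * (c * t v) ^ (k - 1) := by
    calc ‖lam‖ * (c * t v) ^ (k - 1)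
        = ‖lam * (x (v, i)) ^ (k - 1)‖ := by
          rw [norm_mul, norm_pow, hxu0]
      _ = ‖(G.degree v : ℂ) * (x (v, i)) ^ (k - 1)
            + ∑ w ∈ G.neighborFinset v, (∏ j ∈ (Finset.range (k / 2)).erase i, x (v, j))
                * ∏ j ∈ Finset.range (k / 2), x (w, j)‖ := by rw [h]
      _ ≤ (G.degree v : ℝ) * (c * t v) ^ (k - 1)
            + ∑ w ∈ G.neighborFinset v, (c * t v) ^ (k / 2 - 1) * (c ^ (k / 2) * y w) := by
          refine (norm_add_le _ _).trans (add_le_add ?_ ?_)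
          · rw [norm_mul, norm_pow, hxu0, Complex.norm_natCast]
          · exact (norm_sum_le _ _).trans (Finset.sum_le_sum hprod)
      _ = ρ * (c * t v) ^ (k - 1) := hreal
  exact le_of_mul_le_mul_right hkey (pow_pos (mul_pos hcpos (htpos v)) _)

end AuxMain

/-- For a connected graph `G` and even `k ≥ 4`, the spectral radius of the signless
Laplacian tensor of `G^{k,k/2}` equals the spectral radius of the signless Laplacian
matrix `Q(G) = D(G) + A(G)`. -/
theorem stmt_15 {V : Type*} [Fintype V] [DecidableEq V] (G : SimpleGraph V)
    [DecidableRel G.Adj] (hG : G.Connected) (k : ℕ) (hk : Even k) (hk4 : 4 ≤ k) :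
    hQSpecRad (hEdges G k) k =
      specRad (Matrix.diagonal (fun v => (G.degree v : ℝ)) + G.adjMatrix ℝ) := by
  obtain ⟨ρ, y, hρ0, hy, hQy⟩ := exists_perron G hG
  have hne : Nonempty V := hG.nonempty
  have h1 : hQSpecRad (hEdges G k) k = ρ := by
    apply IsGreatest.csSup_eq
    constructor
    · obtain ⟨x, hx0, hxeq⟩ := tensor_achieves G hk hk4 ρ y hy hQy
      exact ⟨(ρ : ℂ), x, hx0, hxeq, by rw [Complex.norm_real, Real.norm_eq_abs, abs_of_nonneg hρ0]⟩
    · rintro r ⟨lam, x, hx0, hxeq, rfl⟩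
      exact tensor_bound G hk hk4 ρ y hy hQy hρ0 lam x hx0 hxeq
  have h2 : specRad (Qmat G) = ρ := by
    apply IsGreatest.csSup_eq
    constructor
    · refine ⟨(ρ : ℂ), ?_, by rw [Complex.norm_real, Real.norm_eq_abs, abs_of_nonneg hρ0]⟩
      rw [matrix_mem_spectrum_iff]
      refine ⟨fun u => (y u : ℂ), ?_, ?_⟩
      · intro hcontr
        have hc := congrFun hcontr (Classical.arbitrary V)
        simp only [Pi.zero_apply, Complex.ofReal_eq_zero] at hc
        exact (hy _).ne' hc
      · funext u
        rw [Qmap_mulVec]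
        have h3 := congrFun hQy u
        rw [Qmat_mulVec] at h3
        have h4 : (G.degree u : ℝ) * y u + ∑ w ∈ G.neighborFinset u, y w = ρ * y u := by
          simpa using h3
        show _ = (ρ : ℂ) * (y u : ℂ)
        exact_mod_cast congrArg Complex.ofReal h4
    · rintro r ⟨μ, hμ, rfl⟩
      obtain ⟨xv, hxv0, hxveq⟩ := (matrix_mem_spectrum_iff _ μ).mp hμ
      exact matrix_bound G ρ y hy hQy hxv0 hxveq
  rw [h1, ← h2]
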